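/- Let α be a positive real affine root with ℓ(s_α) = 2·ht(α∨) − 1. Then α∨ < c = α_0∨ + θ∨ in the dominance order on the affine coroot lattice, where c is the imaginary coroot. -/

import Mathlib

/-- Elements of the affine root lattice (resp. affine coroot lattice) of the affine
(untwisted) Kac–Moody root system, written in coordinates with respect to the simple
roots `α_0, …, α_n` (resp. the simple coroots `α_0∨, …, α_n∨`).  The dominance
(partial) order `a ≤ b` (meaning `b - a` is a nonnegative combination of the simple
roots/coroots) is the coordinatewise order. -/
abbrev AffLat (n : ℕ) := Fin (n + 1) → ℤ

/-- The `i`-th simple root (resp. simple coroot) as a coordinate vector. -/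
def simpleVec {n : ℕ} (i : Fin (n + 1)) : AffLat n := Pi.single i 1

/-- The height of a root (resp. coroot): the sum of its coordinates in the basis of
simple roots (resp. simple coroots). -/
def htv {n : ℕ} (a : AffLat n) : ℤ := ∑ j, a j

/-- `a` is a simple root (a standard basis vector). -/
def IsSimpleVec {n : ℕ} (a : AffLat n) : Prop := ∃ i, a = simpleVec i

/-- Axiomatization of the affine (untwisted) Kac–Moody root system attached to a
finite simple Lie algebra, together with its affine Weyl group `W` (a Coxeter group
with simple reflections `s_0, …, s_n`), its action on the root and coroot lattices,
the coroot map `α ↦ α∨` on real roots, the reflection map `α ↦ s_α`, and the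
imaginary coroot `c = α_0∨ + θ∨`. -/
structure AffineRootSystem (n : ℕ) (W : Type*) [Group W] where
  /-- the affine Cartan matrix: `cartan i j = ⟨α_j, α_i∨⟩` -/
  cartan : Fin (n + 1) → Fin (n + 1) → ℤ
  cartan_diag : ∀ i, cartan i i = 2
  cartan_offdiag : ∀ i j, i ≠ j → cartan i j ≤ 0
  cartan_symm_zero : ∀ i j, cartan i j = 0 → cartan j i = 0
  /-- the Coxeter matrix of the affine Weyl group -/
  M : CoxeterMatrix (Fin (n + 1))
  /-- the affine Weyl group, as a Coxeter system with simple reflections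
  `cs.simple 0, …, cs.simple n` and Coxeter length `cs.length` -/
  cs : CoxeterSystem M W
  /-- the action of the affine Weyl group on the root lattice -/
  actR : W → AffLat n → AffLat n
  actR_one : ∀ a, actR 1 a = a
  actR_mul : ∀ u v a, actR (u * v) a = actR u (actR v a)
  actR_add : ∀ w a b, actR w (a + b) = actR w a + actR w b
  actR_simple : ∀ i a, actR (cs.simple i) a = a - (∑ k, cartan i k * a k) • simpleVec i
  /-- the action of the affine Weyl group on the coroot lattice -/
  actC : W → AffLat n → AffLat n
  actC_one : ∀ b, actC 1 b = b
  actC_mul : ∀ u v b, actC (u * v) b = actC u (actC v b)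
  actC_add : ∀ w a b, actC w (a + b) = actC w a + actC w b
  actC_simple : ∀ i b, actC (cs.simple i) b = b - (∑ k, cartan k i * b k) • simpleVec i
  /-- the coroot `α∨` of a real root `α` -/
  coroot : AffLat n → AffLat n
  coroot_simple : ∀ i, coroot (simpleVec i) = simpleVec i
  coroot_act : ∀ w a, coroot (actR w a) = actC w (coroot a)
  /-- the reflection `s_α ∈ W` of a real root `α` -/
  refl : AffLat n → W
  refl_simple : ∀ i, refl (simpleVec i) = cs.simple i
  refl_act : ∀ w a, refl (actR w a) = w * refl a * w⁻¹
  /-- the coordinates of the imaginary coroot `c = α_0∨ + θ∨` in the basis of simple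
  coroots; thus `imag 0 = 1` and `imag i = m_i` for `i ≥ 1`, where
  `θ∨ = m_1 α_1∨ + ⋯ + m_n α_n∨` -/
  imag : AffLat n
  imag_zero : imag 0 = 1
  imag_pos : ∀ i, 1 ≤ imag i
  imag_invariant : ∀ w, actC w imag = imag
  /-- the standard relation between lengths and positivity of roots:
  `ℓ(w s_α) < ℓ(w)` iff `w(α) < 0` -/
  length_refl_lt_iff : ∀ a : AffLat n, (∃ w i, a = actR w (simpleVec i)) → 0 ≤ a →
    ∀ w : W, cs.length (w * refl a) < cs.length w ↔ actR w a ≤ 0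

namespace AffineRootSystem

variable {n : ℕ} {W : Type*} [Group W] (R : AffineRootSystem n W)

/-- `α` is a positive real root of the affine root system. -/
def IsPosRoot (a : AffLat n) : Prop := (∃ w i, a = R.actR w (simpleVec i)) ∧ 0 ≤ a

/-- The evaluation pairing `⟨α, β∨⟩` of a root `α` (coordinates w.r.t. the simple
roots) against a coroot `β∨` (coordinates w.r.t. the simple coroots), computed via
the affine Cartan matrix `cartan i k = ⟨α_k, α_i∨⟩`. -/
def pairing (a b : AffLat n) : ℤ := ∑ i, ∑ k, b i * (R.cartan i k * a k)

/-- `α` belongs to the set `Π̃` of positive real roots with `ℓ(s_α) = 2 ht(α∨) - 1`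
(the roots appearing in the affine quantum Chevalley formula). -/
def IsChevalleyRoot (a : AffLat n) : Prop :=
  R.IsPosRoot a ∧ (R.cs.length (R.refl a) : ℤ) = 2 * htv (R.coroot a) - 1

end AffineRootSystem

namespace AffineRootSystem

section Aux

variable {n : ℕ} {W : Type*} [Group W] (R : AffineRootSystem n W)

/-! ### Linearity of the actions -/

lemma actR_zero (w : W) : R.actR w 0 = 0 := by
  have h := R.actR_add w 0 0
  rw [add_zero] at h
  exact (left_eq_add.mp h)

lemma actR_neg (w : W) (x : AffLat n) : R.actR w (-x) = -R.actR w x := by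
  have h := R.actR_add w x (-x)
  rw [add_neg_cancel, R.actR_zero] at h
  exact (neg_eq_of_add_eq_zero_right h.symm).symm

lemma actR_sub (w : W) (x y : AffLat n) : R.actR w (x - y) = R.actR w x - R.actR w y := by
  rw [sub_eq_add_neg, R.actR_add, R.actR_neg, ← sub_eq_add_neg]

lemma actR_zsmul (w : W) (m : ℤ) (x : AffLat n) : R.actR w (m • x) = m • R.actR w x := by
  induction m using Int.induction_on with
  | zero => simp [R.actR_zero]
  | succ i ih => rw [add_smul, one_smul, R.actR_add, ih, add_smul, one_smul]
  | pred i ih => rw [sub_smul, one_smul, R.actR_sub, ih, sub_smul, one_smul]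

lemma actC_zero (w : W) : R.actC w 0 = 0 := by
  have h := R.actC_add w 0 0
  rw [add_zero] at h
  exact (left_eq_add.mp h)

lemma actC_neg (w : W) (x : AffLat n) : R.actC w (-x) = -R.actC w x := by
  have h := R.actC_add w x (-x)
  rw [add_neg_cancel, R.actC_zero] at h
  exact (neg_eq_of_add_eq_zero_right h.symm).symm

lemma actC_sub (w : W) (x y : AffLat n) : R.actC w (x - y) = R.actC w x - R.actC w y := by
  rw [sub_eq_add_neg, R.actC_add, R.actC_neg, ← sub_eq_add_neg]

lemma actC_zsmul (w : W) (m : ℤ) (x : AffLat n) : R.actC w (m • x) = m • R.actC w x := by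
  induction m using Int.induction_on with
  | zero => simp [R.actC_zero]
  | succ i ih => rw [add_smul, one_smul, R.actC_add, ih, add_smul, one_smul]
  | pred i ih => rw [sub_smul, one_smul, R.actC_sub, ih, sub_smul, one_smul]

lemma actR_inv_actR (w : W) (x : AffLat n) : R.actR w⁻¹ (R.actR w x) = x := by
  rw [← R.actR_mul, inv_mul_cancel, R.actR_one]

lemma actR_actR_inv (w : W) (x : AffLat n) : R.actR w (R.actR w⁻¹ x) = x := by
  rw [← R.actR_mul, mul_inv_cancel, R.actR_one]

lemma actC_inv_actC (w : W) (x : AffLat n) : R.actC w⁻¹ (R.actC w x) = x := by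
  rw [← R.actC_mul, inv_mul_cancel, R.actC_one]

lemma actC_actC_inv (w : W) (x : AffLat n) : R.actC w (R.actC w⁻¹ x) = x := by
  rw [← R.actC_mul, mul_inv_cancel, R.actC_one]

/-! ### Bilinearity of the pairing -/

lemma pairing_sub_left (x y b : AffLat n) :
    R.pairing (x - y) b = R.pairing x b - R.pairing y b := by
  simp [pairing, mul_sub, Finset.sum_sub_distrib]

lemma pairing_sub_right (a x y : AffLat n) :
    R.pairing a (x - y) = R.pairing a x - R.pairing a y := by
  simp [pairing, sub_mul, Finset.sum_sub_distrib]

lemma pairing_smul_left (m : ℤ) (x b : AffLat n) :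
    R.pairing (m • x) b = m * R.pairing x b := by
  simp only [pairing, Pi.smul_apply, smul_eq_mul, Finset.mul_sum]
  exact Finset.sum_congr rfl fun j _ => Finset.sum_congr rfl fun k _ => by ring

lemma pairing_smul_right (m : ℤ) (a x : AffLat n) :
    R.pairing a (m • x) = m * R.pairing a x := by
  simp only [pairing, Pi.smul_apply, smul_eq_mul, Finset.mul_sum]
  exact Finset.sum_congr rfl fun j _ => Finset.sum_congr rfl fun k _ => by ring

lemma pairing_single_right (a : AffLat n) (i : Fin (n + 1)) :
    R.pairing a (simpleVec i) = ∑ k, R.cartan i k * a k := by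
  simp [pairing, simpleVec, Pi.single_apply, ite_mul, Finset.sum_ite_eq]

lemma pairing_single_left (b : AffLat n) (i : Fin (n + 1)) :
    R.pairing (simpleVec i) b = ∑ k, R.cartan k i * b k := by
  unfold pairing
  refine Finset.sum_congr rfl fun jj _ => ?_
  simp only [simpleVec, Pi.single_apply, mul_ite, mul_one, mul_zero, Finset.sum_ite_eq',
    Finset.mem_univ, if_true]
  ring

lemma pairing_single_single (i i' : Fin (n + 1)) :
    R.pairing (simpleVec i) (simpleVec i') = R.cartan i' i := by
  rw [R.pairing_single_left]
  simp [simpleVec, Pi.single_apply, mul_ite, Finset.sum_ite_eq]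

/-! ### Invariance of the pairing -/

lemma pairing_simple_invariant (i : Fin (n + 1)) (a b : AffLat n) :
    R.pairing (R.actR (R.cs.simple i) a) (R.actC (R.cs.simple i) b) = R.pairing a b := by
  rw [R.actR_simple, R.actC_simple, R.pairing_sub_left, R.pairing_sub_right,
    R.pairing_sub_right, R.pairing_smul_left, R.pairing_smul_right, R.pairing_smul_right,
    R.pairing_smul_left, R.pairing_single_right, R.pairing_single_left,
    R.pairing_single_single, R.cartan_diag]
  ring

lemma pairing_invariant (w : W) (a b : AffLat n) :
    R.pairing (R.actR w a) (R.actC w b) = R.pairing a b := by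
  induction w using R.cs.simple_induction_left with
  | one => rw [R.actR_one, R.actC_one]
  | mul_simple_left w i ih =>
      rw [R.actR_mul, R.actC_mul, R.pairing_simple_invariant, ih]

/-! ### Reflection formulas -/

lemma coroot_eq (w : W) (j : Fin (n + 1)) (a : AffLat n) (h : a = R.actR w (simpleVec j)) :
    R.coroot a = R.actC w (simpleVec j) := by
  rw [h, R.coroot_act, R.coroot_simple]

lemma refl_eq (w : W) (j : Fin (n + 1)) (a : AffLat n) (h : a = R.actR w (simpleVec j)) :
    R.refl a = w * R.cs.simple j * w⁻¹ := by
  rw [h, R.refl_act, R.refl_simple]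

lemma actR_refl_formula (w : W) (j : Fin (n + 1)) (a : AffLat n)
    (h : a = R.actR w (simpleVec j)) (x : AffLat n) :
    R.actR (R.refl a) x = x - R.pairing x (R.coroot a) • a := by
  have hc : R.actC w⁻¹ (R.coroot a) = simpleVec j := by
    rw [R.coroot_eq w j a h, R.actC_inv_actC]
  rw [R.refl_eq w j a h, R.actR_mul, R.actR_mul, R.actR_simple, R.actR_sub, R.actR_zsmul,
    R.actR_actR_inv, ← h]
  congr 2
  rw [← R.pairing_single_right, ← hc]
  exact R.pairing_invariant w⁻¹ x (R.coroot a)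

lemma actC_refl_formula (w : W) (j : Fin (n + 1)) (a : AffLat n)
    (h : a = R.actR w (simpleVec j)) (y : AffLat n) :
    R.actC (R.refl a) y = y - R.pairing a y • R.coroot a := by
  have hc : R.actR w⁻¹ a = simpleVec j := by rw [h, R.actR_inv_actR]
  rw [R.refl_eq w j a h, R.actC_mul, R.actC_mul, R.actC_simple, R.actC_sub, R.actC_zsmul,
    R.actC_actC_inv, R.coroot_eq w j a h]
  congr 2
  rw [← R.pairing_single_left, ← hc]
  exact R.pairing_invariant w⁻¹ a y

lemma pairing_self_real (w : W) (j : Fin (n + 1)) (a : AffLat n)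
    (h : a = R.actR w (simpleVec j)) : R.pairing a (R.coroot a) = 2 := by
  have h2 : R.pairing a (R.coroot a)
      = R.pairing (R.actR w (simpleVec j)) (R.actC w (simpleVec j)) := by
    rw [← h, R.coroot_eq w j a h]
  rw [h2, R.pairing_invariant, R.pairing_single_single, R.cartan_diag]

lemma actR_refl_self (w : W) (j : Fin (n + 1)) (a : AffLat n)
    (h : a = R.actR w (simpleVec j)) : R.actR (R.refl a) a = -a := by
  rw [R.actR_refl_formula w j a h, R.pairing_self_real w j a h, two_smul]
  abel

lemma actC_refl_coroot (w : W) (j : Fin (n + 1)) (a : AffLat n)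
    (h : a = R.actR w (simpleVec j)) : R.actC (R.refl a) (R.coroot a) = -R.coroot a := by
  rw [R.actC_refl_formula w j a h, R.pairing_self_real w j a h, two_smul]
  abel

lemma refl_mul_self (w : W) (j : Fin (n + 1)) (a : AffLat n)
    (h : a = R.actR w (simpleVec j)) : R.refl a * R.refl a = 1 := by
  rw [R.refl_eq w j a h]
  calc w * R.cs.simple j * w⁻¹ * (w * R.cs.simple j * w⁻¹)
      = w * (R.cs.simple j * R.cs.simple j) * w⁻¹ := by group
    _ = 1 := by rw [R.cs.simple_mul_simple_self, mul_one, mul_inv_cancel]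

/-! ### Miscellaneous small lemmas -/

lemma simpleVec_nonneg (i : Fin (n + 1)) : (0 : AffLat n) ≤ simpleVec i := by
  intro k
  simp only [simpleVec, Pi.zero_apply, Pi.single_apply]
  split <;> omega

lemma isPosRoot_simpleVec (i : Fin (n + 1)) : R.IsPosRoot (simpleVec i) :=
  ⟨⟨1, i, (R.actR_one _).symm⟩, simpleVec_nonneg i⟩

lemma real_ne_zero (w : W) (j : Fin (n + 1)) : R.actR w (simpleVec j) ≠ 0 := by
  intro h0
  have h1 : simpleVec j = (0 : AffLat n) := by
    have := congrArg (R.actR w⁻¹) h0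
    rwa [R.actR_inv_actR, R.actR_zero] at this
  have := congrFun h1 j
  simp [simpleVec] at this

lemma htv_add (x y : AffLat n) : htv (x + y) = htv x + htv y := by
  simp [htv, Finset.sum_add_distrib]

lemma htv_single (i : Fin (n + 1)) : htv (simpleVec i) = 1 := by
  simp [htv, simpleVec, Pi.single_apply]

lemma htv_zsmul (m : ℤ) (x : AffLat n) : htv (m • x) = m * htv x := by
  simp [htv, Finset.mul_sum]

lemma pC_imag (i : Fin (n + 1)) : ∑ k, R.cartan k i * R.imag k = 0 := by
  have h := R.imag_invariant (R.cs.simple i)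
  rw [R.actC_simple] at h
  have h2 : (∑ k, R.cartan k i * R.imag k) • simpleVec i = 0 := by
    have := sub_eq_self.mp h
    exact this
  have := congrFun h2 i
  simpa [simpleVec] using this

lemma actR_simple_self (i : Fin (n + 1)) :
    R.actR (R.cs.simple i) (simpleVec i) = -simpleVec i := by
  rw [R.actR_simple]
  have : (∑ k, R.cartan i k * (simpleVec i) k) = 2 := by
    simp [simpleVec, Pi.single_apply, mul_ite, Finset.sum_ite_eq, R.cartan_diag]
  rw [this, two_smul]
  abel

/-- Every real root is coordinatewise nonnegative or coordinatewise nonpositive. -/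
lemma real_dichotomy (w : W) (j : Fin (n + 1)) :
    0 ≤ R.actR w (simpleVec j) ∨ R.actR w (simpleVec j) ≤ 0 := by
  have hax := R.length_refl_lt_iff (simpleVec j) ⟨1, j, (R.actR_one _).symm⟩
    (simpleVec_nonneg j)
  rw [R.refl_simple] at hax
  rcases R.cs.length_mul_simple w j with h | h
  · left
    have hlt : R.cs.length (w * R.cs.simple j * R.cs.simple j) < R.cs.length (w * R.cs.simple j) := by
      rw [R.cs.simple_mul_simple_cancel_right]
      omega
    have := (hax (w * R.cs.simple j)).mp hlt
    rw [R.actR_mul, R.actR_simple_self, R.actR_neg] at this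
    exact neg_nonpos.mp this
  · right
    exact (hax w).mp (by omega)

/-- A positive real root supported on a single coordinate is a simple root. -/
lemma eq_simple_of_support (w : W) (j : Fin (n + 1)) (a : AffLat n)
    (h : a = R.actR w (simpleVec j)) (hpos : 0 ≤ a) (i : Fin (n + 1))
    (hsup : ∀ k, k ≠ i → a k = 0) : a = simpleVec i := by
  set m : ℤ := a i with hm
  have ham : a = m • simpleVec i := by
    funext k
    by_cases hk : k = i
    · subst hk; simp [simpleVec]; exact hm.symm
    · simp [simpleVec, Pi.single_apply, hk, hsup k hk]
  have hm0 : m ≠ 0 := by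
    intro h0
    apply R.real_ne_zero w j
    rw [← h, ham, h0, zero_smul]
  have hm1 : 0 ≤ m := hpos i
  have hunit : m * (R.actR w⁻¹ (simpleVec i)) j = 1 := by
    have he : simpleVec j = m • R.actR w⁻¹ (simpleVec i) := by
      rw [← R.actR_zsmul, ← ham, h, R.actR_inv_actR]
    have := congrFun he j
    simp only [Pi.smul_apply, smul_eq_mul] at this
    rw [← this]
    simp [simpleVec]
  have : m = 1 ∨ m = -1 := Int.isUnit_iff.mp (IsUnit.of_mul_eq_one _ hunit)
  have hm2 : m = 1 := by omega
  rw [ham, hm2, one_smul]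

end Aux

/-! ### The main induction -/

lemma main_induction {n : ℕ} {W : Type*} [Group W] (R : AffineRootSystem n W) :
    ∀ N : ℕ, ∀ (w : W) (j : Fin (n + 1)) (a : AffLat n),
      a = R.actR w (simpleVec j) → 0 ≤ a → R.cs.length (R.refl a) = N →
      0 ≤ R.coroot a ∧ 1 ≤ htv (R.coroot a) ∧ (N : ℤ) ≤ 2 * htv (R.coroot a) - 1 ∧
        ((N : ℤ) = 2 * htv (R.coroot a) - 1 → R.coroot a ≤ R.imag) := by
  intro N
  induction N using Nat.strong_induction_on with
  | _ N IH =>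
  intro w j a ha hpos hN
  by_cases hs : ∃ i, a = simpleVec i
  · -- simple case
    obtain ⟨i, rfl⟩ := hs
    rw [R.coroot_simple]
    have hN1 : N = 1 := by
      rw [R.refl_simple, R.cs.length_simple] at hN
      omega
    refine ⟨simpleVec_nonneg i, ?_, ?_, ?_⟩
    · rw [htv_single]
    · rw [htv_single, hN1]; norm_num
    · intro _
      intro k
      have h1 := R.imag_pos k
      simp only [simpleVec, Pi.single_apply]
      split <;> omega
  · -- non-simple case
    push_neg at hs
    set t := R.refl a with hts
    have ht2 : t * t = 1 := R.refl_mul_self w j a ha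
    have htinv : t⁻¹ = t := inv_eq_of_mul_eq_one_right ht2
    have hane : a ≠ 0 := ha ▸ R.real_ne_zero w j
    have htne : t ≠ 1 := by
      intro h1
      apply hane
      have := R.actR_refl_self w j a ha
      rw [← hts, h1, R.actR_one] at this
      funext k
      have h2 := congrFun this k
      simp only [Pi.neg_apply, Pi.zero_apply] at h2 ⊢
      omega
    obtain ⟨i, hi⟩ := R.cs.exists_leftDescent_of_ne_one htne
    have hi' : R.cs.length (R.cs.simple i * t) < R.cs.length t := hi
    -- right multiplication also descends
    have hri : R.cs.length (t * R.cs.simple i) < R.cs.length t := by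
      have : R.cs.length (t * R.cs.simple i) = R.cs.length (R.cs.simple i * t) := by
        rw [← R.cs.length_inv (t * R.cs.simple i), mul_inv_rev, R.cs.inv_simple, htinv]
      omega
    -- apply the length criterion to `α_i` at `t`
    have haxi := R.length_refl_lt_iff (simpleVec i) ⟨1, i, (R.actR_one _).symm⟩
      (simpleVec_nonneg i)
    rw [R.refl_simple] at haxi
    have hti : R.actR t (simpleVec i) ≤ 0 := (haxi t).mp hri
    set q : ℤ := R.pairing (simpleVec i) (R.coroot a) with hq
    have htif : R.actR t (simpleVec i) = simpleVec i - q • a :=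
      R.actR_refl_formula w j a ha (simpleVec i)
    have hq1 : 1 ≤ q := by
      have h1 := hti i
      rw [htif] at h1
      simp only [Pi.sub_apply, Pi.smul_apply, smul_eq_mul, simpleVec, Pi.single_eq_same,
        Pi.zero_apply] at h1
      -- h1 : 1 - q * a i ≤ 0
      by_contra hcon
      push_neg at hcon
      have hai : (0 : ℤ) ≤ a i := by simpa using hpos i
      nlinarith
    set b : AffLat n := R.actR (R.cs.simple i) a with hb
    have hbr : b = R.actR (R.cs.simple i * w) (simpleVec j) := by
      rw [R.actR_mul, ← ha]
    -- b is a positive root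
    have hbpos : 0 ≤ b := by
      rcases R.real_dichotomy (R.cs.simple i * w) j with h | h
      · rwa [← hbr] at h
      · exfalso
        rw [← hbr] at h
        have hsup : ∀ k, k ≠ i → a k = 0 := by
          intro k hk
          have h1 : b k = a k := by
            rw [hb, R.actR_simple]
            simp [simpleVec, Pi.single_apply, hk]
          have h2 : b k ≤ (0:ℤ) := h k
          have h3 : (0:ℤ) ≤ a k := hpos k
          omega
        exact hs i (R.eq_simple_of_support w j a ha hpos i hsup)
    -- refl b = s_i t s_i and its length is N - 2
    have hreflb : R.refl b = R.cs.simple i * t * R.cs.simple i := by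
      rw [hb, R.refl_act, ← hts, R.cs.inv_simple]
    have hL1 : R.cs.length (R.cs.simple i * t) + 1 = N := by
      rcases R.cs.length_simple_mul t i with h | h <;> rw [hN] at * <;> omega
    have hL2 : R.cs.length (R.cs.simple i * t * R.cs.simple i) + 1
        = R.cs.length (R.cs.simple i * t) := by
      have hlt : R.cs.length (R.cs.simple i * t * R.cs.simple i)
          < R.cs.length (R.cs.simple i * t) := by
        apply (haxi (R.cs.simple i * t)).mpr
        rw [R.actR_mul, htif, R.actR_sub, R.actR_zsmul, R.actR_simple_self, ← hb]
        intro k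
        have h1 : (0:ℤ) ≤ b k := hbpos k
        have h2 : (0:ℤ) ≤ (simpleVec i : AffLat n) k := simpleVec_nonneg i k
        show (-simpleVec i - q • b) k ≤ (0:ℤ)
        simp only [Pi.sub_apply, Pi.neg_apply, Pi.smul_apply, smul_eq_mul]
        nlinarith
      rcases R.cs.length_mul_simple (R.cs.simple i * t) i with h | h <;> omega
    set N' : ℕ := R.cs.length (R.refl b) with hN'
    have hNN' : N' + 2 = N := by rw [hN', hreflb]; omega
    have hN'lt : N' < N := by omega
    obtain ⟨Hb0, Hb1, Hb2, Hb3⟩ := IH N' hN'lt (R.cs.simple i * w) j b hbr hbpos rfl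
    -- coroot relation
    have hcb : R.coroot b = R.coroot a - q • simpleVec i := by
      rw [hb, R.coroot_act, R.actC_simple]
      congr 2
      rw [hq, R.pairing_single_left]
    have hca : R.coroot a = R.coroot b + q • simpleVec i := by rw [hcb]; abel
    have hht : htv (R.coroot a) = htv (R.coroot b) + q := by
      rw [hca, htv_add, htv_zsmul, htv_single, mul_one]
    have hkey : ∀ k, R.coroot a k = R.coroot b k + q * (simpleVec i : AffLat n) k := by
      intro k
      rw [hca]
      simp
    refine ⟨?_, ?_, ?_, ?_⟩
    · intro k
      have h1 : (0:ℤ) ≤ R.coroot b k := Hb0 k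
      have h2 : (0:ℤ) ≤ (simpleVec i : AffLat n) k := simpleVec_nonneg i k
      have h3 := hkey k
      show (0:ℤ) ≤ R.coroot a k
      nlinarith
    · omega
    · push_cast [← hNN']
      omega
    · intro heq
      -- equality case: q = 1 and the induction hypothesis applies to b
      have hqe : q = 1 := by
        push_cast [← hNN'] at heq
        omega
      have hN'eq : (N' : ℤ) = 2 * htv (R.coroot b) - 1 := by
        push_cast [← hNN'] at heq
        omega
      have hble : R.coroot b ≤ R.imag := Hb3 hN'eq
      -- γ = imag - coroot b ; show γ i ≥ 1
      set γ : AffLat n := R.imag - R.coroot b with hγ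
      have hγpos : ∀ k, 0 ≤ γ k := fun k => by
        have h5 : R.coroot b k ≤ R.imag k := hble k
        simp only [hγ, Pi.sub_apply]
        omega
      have hpcγ : ∑ k, R.cartan k i * γ k = 1 := by
        have e1 : ∑ k, R.cartan k i * γ k
            = (∑ k, R.cartan k i * R.imag k) - ∑ k, R.cartan k i * R.coroot b k := by
          simp [hγ, mul_sub, Finset.sum_sub_distrib]
        have e2 : ∑ k, R.cartan k i * R.coroot b k
            = (∑ k, R.cartan k i * R.coroot a k) - q * R.cartan i i := by
          have hsum : ∑ k, R.cartan k i * (q * (simpleVec i : AffLat n) k)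
              = q * R.cartan i i := by
            simp [simpleVec, Pi.single_apply, mul_ite, Finset.sum_ite_eq', mul_comm]
          calc ∑ k, R.cartan k i * R.coroot b k
              = ∑ k, (R.cartan k i * R.coroot a k
                  - R.cartan k i * (q * (simpleVec i : AffLat n) k)) := by
                refine Finset.sum_congr rfl fun k _ => ?_
                rw [hcb]
                simp only [Pi.sub_apply, Pi.smul_apply, smul_eq_mul, mul_sub]
            _ = _ := by rw [Finset.sum_sub_distrib, hsum]
        have e3 : ∑ k, R.cartan k i * R.coroot a k = q := by
          rw [hq, R.pairing_single_left]
        rw [e1, R.pC_imag, e2, e3, R.cartan_diag, hqe]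
        ring
      have hγi : 1 ≤ γ i := by
        have hsplit : R.cartan i i * γ i + ∑ k ∈ Finset.univ.erase i, R.cartan k i * γ k
            = ∑ k, R.cartan k i * γ k :=
          Finset.add_sum_erase Finset.univ (fun k => R.cartan k i * γ k) (Finset.mem_univ i)
        have hnp : ∑ k ∈ Finset.univ.erase i, R.cartan k i * γ k ≤ 0 := by
          apply Finset.sum_nonpos
          intro k hk
          have hki : k ≠ i := (Finset.mem_erase.mp hk).1
          exact mul_nonpos_iff.mpr (Or.inr ⟨R.cartan_offdiag k i hki, hγpos k⟩)
        rw [R.cartan_diag] at hsplit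
        omega
      intro k
      have h1 : R.coroot b k ≤ R.imag k := hble k
      have h2 := hkey k
      by_cases hk : k = i
      · have h3 : γ i = R.imag i - R.coroot b i := by simp [hγ]
        rw [hk] at h1 h2 ⊢
        simp only [simpleVec, Pi.single_eq_same, mul_one, hqe] at h2
        linarith
      · simp only [simpleVec, Pi.single_apply, hk, if_false, mul_zero, add_zero] at h2
        linarith

end AffineRootSystem

/-- If a positive real affine root `α` satisfies
`ℓ(s_α) = 2 ht(α∨) - 1`, then `α∨ < c = α_0∨ + θ∨` in the dominance order on the
affine coroot lattice, `c` being the imaginary coroot. -/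
theorem coroot_lt_imaginary_of_length_eq {n : ℕ} {W : Type*} [Group W]
    (R : AffineRootSystem n W) (a : AffLat n) (ha : R.IsPosRoot a)
    (hlen : (R.cs.length (R.refl a) : ℤ) = 2 * htv (R.coroot a) - 1) :
    R.coroot a < R.imag := by
  obtain ⟨⟨w, j, ha'⟩, hpos⟩ := ha
  obtain ⟨h0, h1, h2, h3⟩ := R.main_induction (R.cs.length (R.refl a)) w j a ha' hpos rfl
  have hle := h3 hlen
  refine lt_of_le_of_ne hle ?_
  intro heq
  have h4 := R.actC_refl_coroot w j a ha'
  have h5 := R.imag_invariant (R.refl a)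
  rw [heq, h5] at h4
  have h6 := congrFun h4 0
  have h7 := R.imag_zero
  simp only [Pi.neg_apply] at h6
  omega
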